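/- For any n×n complex matrix A, the block matrix [[|A|, A*], [A, |A*|]] is positive semidefinite. -/

import Mathlib

open Matrix Polynomial
open scoped ComplexOrder

/-- The positive semidefinite square root of a positive semidefinite matrix
(the definition removed from Mathlib, restored with its old value). -/
noncomputable def Matrix.PosSemidef.sqrt {n 𝕜 : Type*} [Fintype n] [DecidableEq n] [RCLike 𝕜]
    {A : Matrix n n 𝕜} (hA : A.PosSemidef) : Matrix n n 𝕜 :=
  hA.1.eigenvectorUnitary.1 * diagonal ((↑) ∘ (√·) ∘ hA.1.eigenvalues) *
  (star hA.1.eigenvectorUnitary : Matrix n n 𝕜)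

theorem Matrix.PosSemidef.posSemidef_sqrt {n 𝕜 : Type*} [Fintype n] [DecidableEq n] [RCLike 𝕜]
    {A : Matrix n n 𝕜} (hA : A.PosSemidef) : hA.sqrt.PosSemidef := by
  unfold Matrix.PosSemidef.sqrt
  have h := (Matrix.PosSemidef.diagonal (R := 𝕜) (n := n)
    (d := (↑) ∘ (√·) ∘ hA.1.eigenvalues) (fun i => by
      simp only [Pi.zero_apply, Function.comp_apply]
      exact_mod_cast Real.sqrt_nonneg _)).mul_mul_conjTranspose_same
    (hA.1.eigenvectorUnitary.1)
  simpa [Matrix.star_eq_conjTranspose] using h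

/-- The `j`-th largest singular value of a square complex matrix (`j : Fin m`, zero-indexed,
so `sv A 0` is the largest singular value). It is defined as the square root of the `j`-th
largest eigenvalue of `Aᴴ * A`. -/
noncomputable def sv {m : ℕ} (A : Matrix (Fin m) (Fin m) ℂ) (j : Fin m) : ℝ :=
  Real.sqrt ((Matrix.isHermitian_conjTranspose_mul_self A).eigenvalues
    (Tuple.sort ((Matrix.isHermitian_conjTranspose_mul_self A).eigenvalues) j.rev))

/-- The absolute value `|A| = (Aᴴ A)^{1/2}` of a square complex matrix. -/
noncomputable def matAbs {m : ℕ} (A : Matrix (Fin m) (Fin m) ℂ) : Matrix (Fin m) (Fin m) ℂ :=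
  (Matrix.posSemidef_conjTranspose_mul_self A).sqrt

/-- The `2n × 2n` block matrix `[[A, B], [C, D]]`, reindexed by `Fin (n + n)`. -/
noncomputable def blk {n : ℕ} (A B C D : Matrix (Fin n) (Fin n) ℂ) :
    Matrix (Fin (n + n)) (Fin (n + n)) ℂ :=
  Matrix.reindex finSumFinEquiv finSumFinEquiv (Matrix.fromBlocks A B C D)

/-- `f(P)` for a Hermitian matrix `P`, via the spectral functional calculus. -/
noncomputable def herCfc {m : ℕ} {P : Matrix (Fin m) (Fin m) ℂ} (hP : P.IsHermitian)
    (f : ℝ → ℝ) : Matrix (Fin m) (Fin m) ℂ :=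
  hP.cfc f

/-- `|A| ^ r` (real power of the absolute value), via the functional calculus. -/
noncomputable def matAbsPow {m : ℕ} (A : Matrix (Fin m) (Fin m) ℂ) (r : ℝ) :
    Matrix (Fin m) (Fin m) ℂ :=
  herCfc (Matrix.posSemidef_conjTranspose_mul_self A).posSemidef_sqrt.1 (fun t => t ^ r)

/-- `f(|A|)`, via the functional calculus. -/
noncomputable def matAbsCfc {m : ℕ} (A : Matrix (Fin m) (Fin m) ℂ) (f : ℝ → ℝ) :
    Matrix (Fin m) (Fin m) ℂ :=
  herCfc (Matrix.posSemidef_conjTranspose_mul_self A).posSemidef_sqrt.1 f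

/-- The operator norm: the largest singular value. -/
noncomputable def opNorm {m : ℕ} (A : Matrix (Fin m) (Fin m) ℂ) : ℝ :=
  ⨆ j, sv A j


section aux

variable {m : ℕ}

noncomputable def conjAlgHom (U : Matrix.unitaryGroup (Fin m) ℂ) :
    Matrix (Fin m) (Fin m) ℂ →ₐ[ℝ] Matrix (Fin m) (Fin m) ℂ where
  toFun X := (U : Matrix (Fin m) (Fin m) ℂ) * X * (star U : Matrix (Fin m) (Fin m) ℂ)
  map_one' := by
    simp [Matrix.mem_unitaryGroup_iff.mp U.2]
  map_mul' X Y := by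
    have h : (star U : Matrix (Fin m) (Fin m) ℂ) * (U : Matrix (Fin m) (Fin m) ℂ) = 1 :=
      Matrix.mem_unitaryGroup_iff'.mp U.2
    simp only [mul_assoc]
    rw [← mul_assoc (star U : Matrix (Fin m) (Fin m) ℂ) (U : Matrix (Fin m) (Fin m) ℂ), h, one_mul]
  map_zero' := by simp
  map_add' X Y := by simp [mul_add, add_mul]
  commutes' r := by
    simp [Algebra.algebraMap_eq_smul_one, Matrix.mem_unitaryGroup_iff.mp U.2]

lemma aeval_hermitian {P : Matrix (Fin m) (Fin m) ℂ} (hP : P.IsHermitian) (q : ℝ[X]) :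
    aeval P q = (hP.eigenvectorUnitary : Matrix (Fin m) (Fin m) ℂ) *
      diagonal (fun i => ((q.eval (hP.eigenvalues i) : ℝ) : ℂ)) *
      (star hP.eigenvectorUnitary : Matrix (Fin m) (Fin m) ℂ) := by
  set F : (Fin m → ℂ) →ₐ[ℝ] Matrix (Fin m) (Fin m) ℂ :=
    (conjAlgHom hP.eigenvectorUnitary).comp
      ((Matrix.diagonalAlgHom ℝ).restrictScalars ℝ) with hF
  have hPF : P = F (fun i => ((hP.eigenvalues i : ℝ) : ℂ)) := by
    simpa [hF, conjAlgHom, Function.comp_def] using hP.spectral_theorem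
  conv_lhs => rw [hPF, aeval_algHom_apply]
  have hcomp : (aeval (fun i => ((hP.eigenvalues i : ℝ) : ℂ)) q : Fin m → ℂ)
      = fun i => ((q.eval (hP.eigenvalues i) : ℝ) : ℂ) := by
    funext i
    have := aeval_algHom_apply (Pi.evalAlgHom ℝ (fun _ : Fin m => ℂ) i)
      (fun i => ((hP.eigenvalues i : ℝ) : ℂ)) q
    simp only [Pi.evalAlgHom_apply] at this
    rw [← this]
    exact aeval_algebraMap_apply_eq_algebraMap_eval (hP.eigenvalues i) q
  rw [hcomp, hF]
  simp [conjAlgHom]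

end aux

section aux2
variable {m : ℕ}

lemma aeval_eq_sqrt {P : Matrix (Fin m) (Fin m) ℂ} (hP : P.PosSemidef) (q : ℝ[X])
    (hq : ∀ i, q.eval (hP.1.eigenvalues i) = Real.sqrt (hP.1.eigenvalues i)) :
    aeval P q = hP.sqrt := by
  have hfun : (fun i => ((q.eval (hP.1.eigenvalues i) : ℝ) : ℂ))
      = Complex.ofReal ∘ Real.sqrt ∘ hP.1.eigenvalues := by
    funext i; simp [hq i]
  rw [aeval_hermitian hP.1 q, hfun]
  unfold Matrix.PosSemidef.sqrt
  rfl

lemma pow_intertwine (A : Matrix (Fin m) (Fin m) ℂ) (k : ℕ) :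
    (A * Aᴴ) ^ k * A = A * (Aᴴ * A) ^ k := by
  induction k with
  | zero => simp
  | succ k ih =>
      rw [pow_succ, pow_succ]
      calc (A * Aᴴ) ^ k * (A * Aᴴ) * A = (A * Aᴴ) ^ k * A * (Aᴴ * A) := by
            simp [mul_assoc]
        _ = A * (Aᴴ * A) ^ k * (Aᴴ * A) := by rw [ih]
        _ = A * ((Aᴴ * A) ^ k * (Aᴴ * A)) := by rw [mul_assoc]

lemma aeval_intertwine (A : Matrix (Fin m) (Fin m) ℂ) (q : ℝ[X]) :
    aeval (A * Aᴴ) q * A = A * aeval (Aᴴ * A) q := by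
  induction q using Polynomial.induction_on' with
  | add p r hp hr => simp only [map_add, add_mul, mul_add, hp, hr]
  | monomial k a =>
      simp only [aeval_monomial, Algebra.algebraMap_eq_smul_one, smul_mul_assoc, one_mul,
        mul_smul_comm]
      rw [pow_intertwine]

lemma abs_intertwine (A : Matrix (Fin m) (Fin m) ℂ) :
    A * (Matrix.posSemidef_conjTranspose_mul_self A).sqrt
      = (Matrix.posSemidef_conjTranspose_mul_self Aᴴ).sqrt * A := by
  set hS := Matrix.posSemidef_conjTranspose_mul_self A
  set hT := Matrix.posSemidef_conjTranspose_mul_self Aᴴ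
  set s : Finset ℝ := (Finset.univ.image hS.1.eigenvalues) ∪
    (Finset.univ.image hT.1.eigenvalues) with hs
  set q : ℝ[X] := Lagrange.interpolate s id Real.sqrt with hqdef
  have hinj : Set.InjOn id (s : Set ℝ) := Function.injective_id.injOn
  have hnode : ∀ x ∈ s, q.eval x = Real.sqrt x := fun x hx =>
    Lagrange.eval_interpolate_at_node Real.sqrt hinj hx
  have h1 : aeval (Aᴴ * A) q = hS.sqrt :=
    aeval_eq_sqrt hS q fun i => hnode _ (Finset.mem_union_left _
      (Finset.mem_image_of_mem _ (Finset.mem_univ i)))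
  have h2 : aeval (Aᴴᴴ * Aᴴ) q = hT.sqrt :=
    aeval_eq_sqrt hT q fun i => hnode _ (Finset.mem_union_right _
      (Finset.mem_image_of_mem _ (Finset.mem_univ i)))
  rw [← h1, ← h2, conjTranspose_conjTranspose, aeval_intertwine]

end aux2

section main
variable {m : ℕ}

lemma smul_psd {c : ℝ} (hc : 0 ≤ c) {M : Matrix (Fin m) (Fin m) ℂ} (hM : M.PosSemidef) :
    ((c : ℂ) • M).PosSemidef := by
  refine .of_dotProduct_mulVec_nonneg ?_ ?_
  · show ((c : ℂ) • M)ᴴ = _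
    rw [conjTranspose_smul, hM.1]
    norm_num
  · intro x
    rw [smul_mulVec, dotProduct_smul, smul_eq_mul]
    exact mul_nonneg (Complex.zero_le_real.mpr hc) (hM.dotProduct_mulVec_nonneg x)

lemma block_psd (A S T : Matrix (Fin m) (Fin m) ℂ) (hS : S.PosSemidef) (hT : T.PosSemidef)
    (hTT : T * T = A * Aᴴ) (hint : A * S = T * A) :
    (fromBlocks S Aᴴ A T).PosSemidef := by
  have hE : (fromBlocks (1 : Matrix (Fin m) (Fin m) ℂ) 0 0 (0 : Matrix (Fin m) (Fin m) ℂ)).PosSemidef := by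
    have := Matrix.posSemidef_conjTranspose_mul_self
      (fromBlocks (1 : Matrix (Fin m) (Fin m) ℂ) 0 0 (0 : Matrix (Fin m) (Fin m) ℂ))
    simpa [fromBlocks_conjTranspose, fromBlocks_multiply] using this
  -- the ε-perturbed matrix is PSD
  have key : ∀ ε : ℝ, 0 < ε →
      (fromBlocks (S + (ε : ℂ) • 1) Aᴴ A T).PosSemidef := by
    intro ε hε
    have hone : ((ε : ℂ) • (1 : Matrix (Fin m) (Fin m) ℂ)).PosDef := by
      rw [smul_one_eq_diagonal]
      exact Matrix.PosDef.diagonal fun i => by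
        exact_mod_cast Complex.zero_lt_real.mpr hε
    set Sε := S + (ε : ℂ) • (1 : Matrix (Fin m) (Fin m) ℂ) with hSe
    set Tε := T + (ε : ℂ) • (1 : Matrix (Fin m) (Fin m) ℂ) with hTe
    have hSε : Sε.PosDef := Matrix.PosDef.posSemidef_add hS hone
    have hTε : Tε.PosDef := Matrix.PosDef.posSemidef_add hT hone
    haveI := hSε.isUnit.invertible
    have hSdet : IsUnit Sε.det := (isUnit_iff_isUnit_det _).mp hSε.isUnit
    have hTdet : IsUnit Tε.det := (isUnit_iff_isUnit_det _).mp hTε.isUnit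
    -- intertwining
    have h1 : A * Sε = Tε * A := by
      rw [hSe, hTe, mul_add, add_mul, hint, mul_smul_comm, smul_mul_assoc, mul_one, one_mul]
    have h2 : A * Sε⁻¹ = Tε⁻¹ * A := by
      have : Tε⁻¹ * (A * Sε) * Sε⁻¹ = Tε⁻¹ * (Tε * A) * Sε⁻¹ := by rw [h1]
      rwa [mul_assoc, mul_assoc, Matrix.mul_nonsing_inv _ hSdet, mul_one,
        ← mul_assoc, Matrix.nonsing_inv_mul _ hTdet, one_mul, eq_comm] at this
    -- the Schur complement is PSD
    have hR : (T - Aᴴᴴ * Sε⁻¹ * Aᴴ).PosSemidef := by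
      have hP : ((ε : ℂ) • (T * T) + ((ε : ℂ) * ε) • T).PosSemidef := by
        have h3 : (T * T).PosSemidef := by rw [← pow_two]; exact hT.pow 2
        have := (smul_psd hε.le h3).add (smul_psd (mul_nonneg hε.le hε.le) hT)
        rw [Complex.ofReal_mul] at this
        exact this
      have hconj := hP.conjTranspose_mul_mul_same Tε⁻¹
      have hTinvH : (Tε⁻¹)ᴴ = Tε⁻¹ := by
        rw [conjTranspose_nonsing_inv, hTε.1.eq]
      rw [hTinvH] at hconj
      have heq : T - Aᴴᴴ * Sε⁻¹ * Aᴴ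
          = Tε⁻¹ * ((ε : ℂ) • (T * T) + ((ε : ℂ) * ε) • T) * Tε⁻¹ := by
        rw [conjTranspose_conjTranspose, h2, mul_assoc, ← hTT]
        have expand : ((ε : ℂ) • (T * T) + ((ε : ℂ) * ε) • T) = ((ε : ℂ) • T) * Tε := by
          rw [hTe, mul_add, smul_mul_assoc, mul_smul_comm, mul_one, smul_smul]
        rw [expand, mul_assoc Tε⁻¹, mul_assoc ((ε : ℂ) • T), Matrix.mul_nonsing_inv _ hTdet,
          mul_one, mul_smul_comm]
        -- ⊢ T - Tε⁻¹ * (T * T) = (ε:ℂ) • (Tε⁻¹ * T)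
        have : Tε * T = T * T + (ε : ℂ) • T := by
          rw [hTe, add_mul, smul_mul_assoc, one_mul]
        calc T - Tε⁻¹ * (T * T)
            = Tε⁻¹ * (Tε * T) - Tε⁻¹ * (T * T) := by
              rw [← mul_assoc Tε⁻¹ Tε T, Matrix.nonsing_inv_mul _ hTdet, one_mul]
          _ = Tε⁻¹ * (T * T + (ε : ℂ) • T) - Tε⁻¹ * (T * T) := by rw [this]
          _ = (ε : ℂ) • (Tε⁻¹ * T) := by rw [mul_add, mul_smul_comm]; abel
      rw [heq]
      exact hconj
    have := (Matrix.PosDef.fromBlocks₁₁ Aᴴ T hSε).mpr hR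
    simpa [conjTranspose_conjTranspose] using this
  refine .of_dotProduct_mulVec_nonneg ?_ ?_
  · show (fromBlocks S Aᴴ A T)ᴴ = _
    rw [fromBlocks_conjTranspose, hS.1.eq, hT.1.eq, conjTranspose_conjTranspose]
  · intro x
    set q := star x ⬝ᵥ (fromBlocks S Aᴴ A T) *ᵥ x with hq
    set c := star x ⬝ᵥ (fromBlocks (1 : Matrix (Fin m) (Fin m) ℂ) 0 0 0) *ᵥ x with hc
    have hc0 : 0 ≤ c := hE.dotProduct_mulVec_nonneg x
    have hkey : ∀ ε : ℝ, 0 < ε → 0 ≤ q + (ε : ℂ) * c := by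
      intro ε hε
      have h := (key ε hε).dotProduct_mulVec_nonneg x
      have hsplit : fromBlocks (S + (ε : ℂ) • 1) Aᴴ A T
          = fromBlocks S Aᴴ A T + (ε : ℂ) • fromBlocks (1 : Matrix (Fin m) (Fin m) ℂ) 0 0 0 := by
        rw [fromBlocks_smul, fromBlocks_add]
        simp
      rwa [hsplit, add_mulVec, dotProduct_add, smul_mulVec, dotProduct_smul,
        smul_eq_mul] at h
    have hcim : c.im = 0 := ((Complex.le_def).mp hc0).2.symm
    have him : q.im = 0 := by
      have h1 := ((Complex.le_def).mp (hkey 1 one_pos)).2.symm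
      simpa [hcim] using h1
    have hre : 0 ≤ q.re := by
      by_contra hneg
      push_neg at hneg
      have hcre : 0 ≤ c.re := ((Complex.le_def).mp hc0).1
      set ε := -q.re / (c.re + 1) with hε
      have hεpos : 0 < ε := div_pos (by linarith) (by linarith)
      have := ((Complex.le_def).mp (hkey ε hεpos)).1
      simp only [Complex.add_re, Complex.mul_re, Complex.ofReal_re, Complex.ofReal_im,
        Complex.zero_re, hcim] at this
      rw [hε] at this
      have h2 : (0:ℝ) < c.re + 1 := by linarith
      have h3 : -q.re / (c.re + 1) * c.re < -q.re := by
        rw [div_mul_eq_mul_div, div_lt_iff₀ h2]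
        nlinarith
      linarith
    rw [Complex.le_def]
    exact ⟨by simpa using hre, by simp [him]⟩

lemma psd_sqrt_mul_self {P : Matrix (Fin m) (Fin m) ℂ} (hP : P.PosSemidef) :
    hP.sqrt * hP.sqrt = P := by
  have hU : (star hP.1.eigenvectorUnitary : Matrix (Fin m) (Fin m) ℂ) *
      (hP.1.eigenvectorUnitary : Matrix (Fin m) (Fin m) ℂ) = 1 :=
    Matrix.mem_unitaryGroup_iff'.mp hP.1.eigenvectorUnitary.2
  have hd : diagonal (fun i => ((Real.sqrt (hP.1.eigenvalues i) : ℝ) : ℂ)) *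
      diagonal (fun i => ((Real.sqrt (hP.1.eigenvalues i) : ℝ) : ℂ))
      = diagonal (fun i => ((hP.1.eigenvalues i : ℝ) : ℂ)) := by
    rw [diagonal_mul_diagonal]
    congr 1
    funext i
    rw [← Complex.ofReal_mul, Real.mul_self_sqrt (hP.eigenvalues_nonneg i)]
  have hPF : P = (hP.1.eigenvectorUnitary : Matrix (Fin m) (Fin m) ℂ) *
      diagonal (fun i => ((hP.1.eigenvalues i : ℝ) : ℂ)) *
      (star hP.1.eigenvectorUnitary : Matrix (Fin m) (Fin m) ℂ) := by
    simpa [Function.comp_def] using hP.1.spectral_theorem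
  change (hP.1.eigenvectorUnitary : Matrix (Fin m) (Fin m) ℂ) *
      diagonal (fun i => ((Real.sqrt (hP.1.eigenvalues i) : ℝ) : ℂ)) *
      (star hP.1.eigenvectorUnitary : Matrix (Fin m) (Fin m) ℂ) *
      ((hP.1.eigenvectorUnitary : Matrix (Fin m) (Fin m) ℂ) *
      diagonal (fun i => ((Real.sqrt (hP.1.eigenvalues i) : ℝ) : ℂ)) *
      (star hP.1.eigenvectorUnitary : Matrix (Fin m) (Fin m) ℂ)) = P
  conv_rhs => rw [hPF]
  set U := (hP.1.eigenvectorUnitary : Matrix (Fin m) (Fin m) ℂ)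
  set sU := (star hP.1.eigenvectorUnitary : Matrix (Fin m) (Fin m) ℂ)
  set D := diagonal (fun i => ((Real.sqrt (hP.1.eigenvalues i) : ℝ) : ℂ))
  calc U * D * sU * (U * D * sU) = U * (D * (sU * U) * D) * sU := by simp only [mul_assoc]
    _ = _ := by rw [hU, mul_one, hd]

end main

theorem abs_block_posSemidef {n : ℕ} (A : Matrix (Fin n) (Fin n) ℂ) :
    (blk (matAbs A) Aᴴ A (matAbs Aᴴ)).PosSemidef := by
  have hS : (matAbs A).PosSemidef :=
    (Matrix.posSemidef_conjTranspose_mul_self A).posSemidef_sqrt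
  have hT : (matAbs Aᴴ).PosSemidef :=
    (Matrix.posSemidef_conjTranspose_mul_self Aᴴ).posSemidef_sqrt
  have hTT : matAbs Aᴴ * matAbs Aᴴ = A * Aᴴ := by
    rw [show matAbs Aᴴ * matAbs Aᴴ = Aᴴᴴ * Aᴴ from
      psd_sqrt_mul_self (Matrix.posSemidef_conjTranspose_mul_self Aᴴ), conjTranspose_conjTranspose]
  have hint : A * matAbs A = matAbs Aᴴ * A := abs_intertwine A
  have h := block_psd A (matAbs A) (matAbs Aᴴ) hS hT hTT hint
  rw [blk, reindex_apply]
  exact (posSemidef_submatrix_equiv _).mpr h
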